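/- Let Γ be an ω-categorical structure and let f : Γ₁ → Γ₂ be a homomorphism between substructures of Γ that preserves all existential positive formulas satisfied in Γ (with parameters from Γ₁). If Γ contains all existential positive definable relations, then for any tuple ū in Γ₁ and any tuple b̄ in Γ inducing a structure isomorphic to that induced by ū, any homomorphism defined on b̄ by b_j ↦ f(u_j) extends to a homomorphism on any finite superset of b̄ into Γ. -/
import Mathlib


open FirstOrder Language Structure

universe u v w

/-- The structure induced on a subset of a relational structure. -/
def Set.inducedStructure (L : Language) [L.IsRelational] {M : Type u} [L.Structure M]
    (s : Set M) : L.Structure s where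
  funMap := fun f _ => isEmptyElim f
  RelMap := fun r x => RelMap r fun i => (x i : M)

attribute [instance] Set.inducedStructure

/-- ω-categoricity via Ryll-Nardzewski: the automorphism group is oligomorphic, i.e.
has finitely many orbits of `n`-tuples for every `n`. -/
def Oligomorphic (L : Language) (M : Type u) [L.Structure M] : Prop :=
  ∀ n : ℕ, ∃ F : Set (Fin n → M), F.Finite ∧
    ∀ t : Fin n → M, ∃ s ∈ F, ∃ α : M ≃[L] M, ∀ i, α (s i) = t i

/-- The age of `M` is contained in the age of `N`: every finite induced substructure of `M`
embeds into `N`. -/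
def AgeLE (L : Language) (M : Type u) (N : Type v) [L.Structure M] [L.Structure N] : Prop :=
  ∀ s : Set M, s.Finite → ∃ f : M → N, Set.InjOn f s ∧
    ∀ (n : ℕ) (r : L.Relations n) (x : Fin n → M), (∀ i, x i ∈ s) →
      (RelMap r x ↔ RelMap r (f ∘ x))

/-- A structure is a core if every endomorphism is an embedding (injective and reflecting
all relations). -/
def IsCore (L : Language) (N : Type u) [L.Structure N] : Prop :=
  ∀ e : N →[L] N, Function.Injective e ∧
    ∀ (n : ℕ) (r : L.Relations n) (x : Fin n → N), RelMap r (⇑e ∘ x) ↔ RelMap r x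

/-- A structure is homogeneous if every isomorphism between finite induced substructures
extends to an automorphism. -/
def IsHomogeneous (L : Language) (N : Type u) [L.Structure N] : Prop :=
  ∀ s : Set N, s.Finite → ∀ f : N → N, Set.InjOn f s →
    (∀ (n : ℕ) (r : L.Relations n) (x : Fin n → N), (∀ i, x i ∈ s) →
      (RelMap r x ↔ RelMap r (f ∘ x))) →
    ∃ α : N ≃[L] N, ∀ a ∈ s, α a = f a

/-- Homomorphic equivalence: homomorphisms exist in both directions. -/
def HomEquiv (L : Language) (M : Type u) (N : Type v) [L.Structure M] [L.Structure N] : Prop :=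
  Nonempty (M →[L] N) ∧ Nonempty (N →[L] M)

/-- Existential positive formulas: built from atomic formulas by `∧`, `∨` and `∃`. -/
inductive IsEP {L : Language} {α : Type w} : ∀ {n : ℕ}, L.BoundedFormula α n → Prop
  | equal {n : ℕ} (t₁ t₂ : L.Term (α ⊕ Fin n)) : IsEP (t₁.bdEqual t₂)
  | rel {n l : ℕ} (R : L.Relations l) (ts : Fin l → L.Term (α ⊕ Fin n)) :
      IsEP (R.boundedFormula ts)
  | inf {n : ℕ} {φ ψ : L.BoundedFormula α n} : IsEP φ → IsEP ψ → IsEP (φ ⊓ ψ)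
  | sup {n : ℕ} {φ ψ : L.BoundedFormula α n} : IsEP φ → IsEP ψ → IsEP (φ ⊔ ψ)
  | ex {n : ℕ} {φ : L.BoundedFormula α (n + 1)} : IsEP φ → IsEP φ.ex

/-- Primitive positive formulas: existentially quantified conjunctions of atomic formulas. -/
inductive IsPP {L : Language} {α : Type w} : ∀ {n : ℕ}, L.BoundedFormula α n → Prop
  | equal {n : ℕ} (t₁ t₂ : L.Term (α ⊕ Fin n)) : IsPP (t₁.bdEqual t₂)
  | rel {n l : ℕ} (R : L.Relations l) (ts : Fin l → L.Term (α ⊕ Fin n)) :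
      IsPP (R.boundedFormula ts)
  | inf {n : ℕ} {φ ψ : L.BoundedFormula α n} : IsPP φ → IsPP ψ → IsPP (φ ⊓ ψ)
  | ex {n : ℕ} {φ : L.BoundedFormula α (n + 1)} : IsPP φ → IsPP φ.ex

/-- Universal formulas. -/
inductive IsUniv {L : Language} {α : Type w} : ∀ {n : ℕ}, L.BoundedFormula α n → Prop
  | of_isQF {n : ℕ} {φ : L.BoundedFormula α n} : φ.IsQF → IsUniv φ
  | all {n : ℕ} {φ : L.BoundedFormula α (n + 1)} : IsUniv φ → IsUniv φ.all

/-- Existential formulas. -/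
inductive IsExi {L : Language} {α : Type w} : ∀ {n : ℕ}, L.BoundedFormula α n → Prop
  | of_isQF {n : ℕ} {φ : L.BoundedFormula α n} : φ.IsQF → IsExi φ
  | ex {n : ℕ} {φ : L.BoundedFormula α (n + 1)} : IsExi φ → IsExi φ.ex

/-- `Γ` contains, among its relations, every relation definable by an existential positive
formula. -/
def ContainsEP (L : Language) (M : Type u) [L.Structure M] : Prop :=
  ∀ (n : ℕ) (φ : L.Formula (Fin n)), IsEP φ →
    ∃ r : L.Relations n, ∀ x : Fin n → M, RelMap r x ↔ φ.Realize x

/-- `Γ` contains, among its relations, every relation definable by a primitive positive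
formula. -/
def ContainsPP (L : Language) (M : Type u) [L.Structure M] : Prop :=
  ∀ (n : ℕ) (φ : L.Formula (Fin n)), IsPP φ →
    ∃ r : L.Relations n, ∀ x : Fin n → M, RelMap r x ↔ φ.Realize x

/-- A structure is model-complete if every self-embedding is elementary. -/
def IsModelComplete (L : Language) (M : Type u) [L.Structure M] : Prop :=
  ∀ e : M ↪[L] M, ∀ (n : ℕ) (φ : L.Formula (Fin n)) (x : Fin n → M),
    φ.Realize x ↔ φ.Realize (⇑e ∘ x)

/-- The universal first-order theory of a structure. -/
def UnivTheory (L : Language) (M : Type u) [L.Structure M] : L.Theory :=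
  {σ : L.Sentence | IsUniv σ ∧ M ⊨ σ}

section AuxEP

open FirstOrder Language Structure

/-- An atomic "fact" about a tuple of length `N`: either an equality between two
coordinates or a relation applied to coordinates. -/
def EPFact (L : Language) (N : ℕ) : Type _ :=
  (Fin N × Fin N) ⊕ (Σ n : ℕ, L.Relations n × (Fin n → Fin N))

/-- Whether a tuple satisfies a fact. -/
def EPFact.holds {L : Language} {M : Type u} [L.Structure M] {N : ℕ}
    (t : Fin N → M) : EPFact L N → Prop
  | .inl pq => t pq.1 = t pq.2
  | .inr s => RelMap s.2.1 (t ∘ s.2.2)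

/-- The atomic formula corresponding to a fact, with `k` free and `m` bound variables. -/
def EPFact.toFormula {L : Language} {k m : ℕ} : EPFact L (k + m) → L.BoundedFormula (Fin k) m
  | .inl pq => Term.bdEqual (Term.var (finSumFinEquiv.symm pq.1))
      (Term.var (finSumFinEquiv.symm pq.2))
  | .inr s => Relations.boundedFormula s.2.1 (fun i => Term.var (finSumFinEquiv.symm (s.2.2 i)))

theorem EPFact.isEP_toFormula {L : Language} {k m : ℕ} (φ : EPFact L (k + m)) :
    IsEP φ.toFormula := by
  cases φ with
  | inl pq => exact IsEP.equal _ _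
  | inr s => exact IsEP.rel _ _

theorem elim_symm_eq_append {α : Type*} {k m : ℕ} (v : Fin k → α) (xs : Fin m → α)
    (p : Fin (k + m)) : Sum.elim v xs (finSumFinEquiv.symm p) = Fin.append v xs p := by
  obtain ⟨q, rfl⟩ : ∃ q, finSumFinEquiv q = p := ⟨_, finSumFinEquiv.apply_symm_apply p⟩
  rw [Equiv.symm_apply_apply]
  cases q with
  | inl i => simp [Fin.append_left]
  | inr j => simp [Fin.append_right]

theorem EPFact.realize_toFormula {L : Language} {M : Type u} [L.Structure M] {k m : ℕ}
    (φ : EPFact L (k + m)) (v : Fin k → M) (xs : Fin m → M) :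
    φ.toFormula.Realize v xs ↔ φ.holds (Fin.append v xs) := by
  cases φ with
  | inl pq =>
    simp [EPFact.toFormula, EPFact.holds, elim_symm_eq_append]
  | inr s =>
    simp only [EPFact.toFormula, EPFact.holds, BoundedFormula.realize_rel, Term.realize_var,
      elim_symm_eq_append, Function.comp_def]

/-- A fact holds of a tuple iff it holds of its image under an automorphism. -/
theorem EPFact.holds_iff_of_equiv {L : Language} {M : Type u} [L.Structure M] {N : ℕ}
    (φ : EPFact L N) (s t : Fin N → M) (α : M ≃[L] M) (hst : ∀ i, α (s i) = t i) :
    φ.holds s ↔ φ.holds t := by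
  have ht : t = ⇑α ∘ s := funext fun i => (hst i).symm
  cases φ with
  | inl pq =>
    simp only [EPFact.holds, ht, Function.comp_apply]
    exact (α.injective.eq_iff).symm
  | inr r =>
    simp only [EPFact.holds, ht]
    have : (⇑α ∘ s) ∘ r.2.2 = ⇑α ∘ (s ∘ r.2.2) := rfl
    rw [this, Equiv.map_rel]

/-- Conjunction of a list of facts (with a default always-true fact for the empty list). -/
def epConj {L : Language} {k m : ℕ} (d : EPFact L (k + m)) :
    List (EPFact L (k + m)) → L.BoundedFormula (Fin k) m
  | [] => d.toFormula
  | φ :: l => φ.toFormula ⊓ epConj d l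

theorem isEP_epConj {L : Language} {k m : ℕ} (d : EPFact L (k + m))
    (l : List (EPFact L (k + m))) : IsEP (epConj d l) := by
  induction l with
  | nil => exact d.isEP_toFormula
  | cons φ l ih => exact IsEP.inf φ.isEP_toFormula ih

theorem realize_epConj {L : Language} {M : Type u} [L.Structure M] {k m : ℕ}
    (d : EPFact L (k + m)) (l : List (EPFact L (k + m))) (v : Fin k → M) (xs : Fin m → M) :
    (epConj d l).Realize v xs ↔
      (d.holds (Fin.append v xs) ∧ ∀ φ ∈ l, EPFact.holds (Fin.append v xs) φ) := by
  induction l with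
  | nil => simp [epConj, EPFact.realize_toFormula]
  | cons φ l ih =>
    simp only [epConj, BoundedFormula.realize_inf, ih, EPFact.realize_toFormula,
      List.mem_cons]
    constructor
    · rintro ⟨h1, h2, h3⟩
      exact ⟨h2, fun ψ hψ => hψ.elim (fun h => h ▸ h1) (h3 ψ)⟩
    · rintro ⟨h1, h2⟩
      exact ⟨h2 φ (Or.inl rfl), h1, fun ψ hψ => h2 ψ (Or.inr hψ)⟩

theorem IsEP.exs' {L : Language} {α : Type w} :
    ∀ {n : ℕ} {φ : L.BoundedFormula α n}, IsEP φ → IsEP φ.exs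
  | 0, _, h => h
  | _ + 1, φ, h => show IsEP φ.ex.exs from IsEP.exs' h.ex

end AuxEP

theorem stmt_14 {L : Language} [L.IsRelational] {M : Type u} [L.Structure M] [Countable M]
    (hM : Oligomorphic L M) (hEP : ContainsEP L M)
    (G1 G2 : Set M) (f : M → M) (hmap : Set.MapsTo f G1 G2)
    (hhom : ∀ (n : ℕ) (r : L.Relations n) (x : Fin n → M), (∀ i, x i ∈ G1) →
      RelMap r x → RelMap r (f ∘ x))
    (hpres : ∀ (n : ℕ) (φ : L.Formula (Fin n)), IsEP φ → ∀ x : Fin n → M,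
      (∀ i, x i ∈ G1) → φ.Realize x → φ.Realize (f ∘ x)) :
    ∀ (k : ℕ) (u : Fin k → M), (∀ i, u i ∈ G1) →
      ∀ b : Fin k → M,
        (∀ i j, b i = b j ↔ u i = u j) →
        (∀ (n : ℕ) (r : L.Relations n) (σ : Fin n → Fin k),
          RelMap r (b ∘ σ) ↔ RelMap r (u ∘ σ)) →
        ∀ (m : ℕ) (bb : Fin (k + m) → M), (∀ i : Fin k, bb (Fin.castAdd m i) = b i) →
          ∃ h : M → M, (∀ i, h (b i) = f (u i)) ∧
            (∀ p q : Fin (k + m), bb p = bb q → h (bb p) = h (bb q)) ∧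
            ∀ (n : ℕ) (r : L.Relations n) (σ : Fin n → Fin (k + m)),
              RelMap r (bb ∘ σ) → RelMap r (h ∘ bb ∘ σ) := by
  classical
  intro k u hu b hbeq hbrel m bb hbb
  rcases Nat.eq_zero_or_pos (k + m) with hkm | hkm
  · -- degenerate case: no variables at all
    have hk0 : k = 0 := by omega
    refine ⟨id, fun i => absurd i.isLt (by omega), fun p q => absurd p.isLt (by omega),
      fun n r σ hr => hr⟩
  · set v0 : Fin (k + m) := ⟨0, hkm⟩ with hv0
    -- the default always-true fact
    set d : EPFact L (k + m) := Sum.inl (v0, v0) with hd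
    have hdbb : EPFact.holds bb d := rfl
    -- finitely many orbits of (k+m)-tuples
    obtain ⟨Frep, hFfin, hFrep⟩ := hM (k + m)
    -- for each representative, choose a fact of bb that it fails, if any
    set bad : (Fin (k + m) → M) → EPFact L (k + m) := fun s =>
      if hx : ∃ φ : EPFact L (k + m), φ.holds bb ∧ ¬ φ.holds s then hx.choose else d
      with hbad
    have hbad_holds : ∀ s, EPFact.holds bb (bad s) := by
      intro s
      by_cases hx : ∃ φ : EPFact L (k + m), φ.holds bb ∧ ¬ φ.holds s
      · simp only [hbad, dif_pos hx]; exact hx.choose_spec.1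
      · simp only [hbad, dif_neg hx]; exact hdbb
    set l : List (EPFact L (k + m)) := hFfin.toFinset.toList.map bad with hl
    have hl_holds : ∀ φ ∈ l, EPFact.holds bb φ := by
      intro φ hφ
      obtain ⟨s, _, rfl⟩ := List.mem_map.1 hφ
      exact hbad_holds s
    -- the existential positive formula
    set Φ : L.Formula (Fin k) := (epConj d l).exs with hΦ
    have hΦEP : IsEP Φ := IsEP.exs' (isEP_epConj d l)
    -- b realizes Φ (witnessed by bb)
    have hb_real : Φ.Realize b := by
      rw [hΦ, BoundedFormula.realize_exs]
      refine ⟨fun j => bb (Fin.natAdd k j), ?_⟩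
      have hap : Fin.append b (fun j => bb (Fin.natAdd k j)) = bb := by
        refine funext (Fin.addCases (fun i => ?_) (fun j => ?_))
        · rw [Fin.append_left]; exact (hbb i).symm
        · rw [Fin.append_right]
      rw [realize_epConj, hap]
      exact ⟨hdbb, hl_holds⟩
    -- Φ is equivalent to a relation of L; transfer from b to u
    obtain ⟨rΦ, hrΦ⟩ := hEP k Φ hΦEP
    have hu_real : Φ.Realize u := by
      have h1 : RelMap rΦ (b ∘ id) ↔ RelMap rΦ (u ∘ id) := hbrel k rΦ id
      simp only [Function.comp_id] at h1
      exact (hrΦ u).1 (h1.1 ((hrΦ b).2 hb_real))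
    -- f preserves Φ
    have hfu_real : Φ.Realize (f ∘ u) := hpres k Φ hΦEP u hu hu_real
    rw [hΦ, BoundedFormula.realize_exs] at hfu_real
    obtain ⟨xs, hxs⟩ := hfu_real
    rw [realize_epConj] at hxs
    set c : Fin (k + m) → M := Fin.append (f ∘ u) xs with hc
    have hc_l : ∀ φ ∈ l, EPFact.holds c φ := hxs.2
    -- c satisfies *all* facts of bb, via the orbit argument
    obtain ⟨s, hsF, α, hα⟩ := hFrep c
    have hs_all : ∀ φ : EPFact L (k + m), φ.holds bb → φ.holds s := by
      by_contra hcon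
      push_neg at hcon
      have hx : ∃ φ : EPFact L (k + m), φ.holds bb ∧ ¬ φ.holds s := hcon
      have hbs : bad s = hx.choose := by simp only [hbad, dif_pos hx]
      have hmem : bad s ∈ l :=
        List.mem_map.2 ⟨s, Finset.mem_toList.2 (hFfin.mem_toFinset.2 hsF), rfl⟩
      have h1 : EPFact.holds c (bad s) := hc_l _ hmem
      have h2 : EPFact.holds s (bad s) :=
        ((bad s).holds_iff_of_equiv s c α hα).2 h1
      rw [hbs] at h2
      exact hx.choose_spec.2 h2
    have hc_all : ∀ φ : EPFact L (k + m), φ.holds bb → φ.holds c := fun φ hφ =>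
      (φ.holds_iff_of_equiv s c α hα).1 (hs_all φ hφ)
    have hceq : ∀ p q : Fin (k + m), bb p = bb q → c p = c q := fun p q hpq =>
      hc_all (Sum.inl (p, q)) hpq
    have hcrel : ∀ (n : ℕ) (r : L.Relations n) (σ : Fin n → Fin (k + m)),
        RelMap r (bb ∘ σ) → RelMap r (c ∘ σ) := fun n r σ hr =>
      hc_all (Sum.inr ⟨n, r, σ⟩) hr
    -- define h
    refine ⟨fun x => if hx : ∃ p, bb p = x then c hx.choose else x, ?_, ?_, ?_⟩
    · intro i
      have hx : ∃ p, bb p = b i := ⟨Fin.castAdd m i, hbb i⟩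
      simp only [dif_pos hx]
      have h1 : c hx.choose = c (Fin.castAdd m i) :=
        hceq _ _ (hx.choose_spec.trans (hbb i).symm)
      rw [h1, hc, Fin.append_left]
      rfl
    · intro p q hpq
      have hxp : ∃ p', bb p' = bb p := ⟨p, rfl⟩
      have hxq : ∃ q', bb q' = bb q := ⟨q, rfl⟩
      simp only [dif_pos hxp, dif_pos hxq]
      exact hceq _ _ (hxp.choose_spec.trans (hpq.trans hxq.choose_spec.symm))
    · intro n r σ hr
      have hco : (fun x => if hx : ∃ p, bb p = x then c hx.choose else x) ∘ bb ∘ σ = c ∘ σ := by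
        funext i
        have hx : ∃ p, bb p = bb (σ i) := ⟨σ i, rfl⟩
        simp only [Function.comp_apply, dif_pos hx]
        exact hceq _ _ hx.choose_spec
      rw [hco]
      exact hcrel n r σ hr
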